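/- Let X ⊆ ℝ^n and Y ⊆ ℝ^m be nonempty and f : ℝ^n × ℝ^m → ℝ. A pair (x*,y*) ∈ X × Y is a local minimax point of f if and only if there exist δ₀ > 0 and a function h : (0,δ₀] → [0,∞) with h(δ) → 0 as δ → 0⁺, such that for every δ ∈ (0,δ₀], every x ∈ X with ‖x − x*‖ ≤ δ and every y ∈ Y with ‖y − y*‖ ≤ δ one has f(x*,y) ≤ f(x*,y*) and f(x*,y*) ≤ f̄_{h(δ),y*}(x). -/
import Mathlib


open Filter

/-- Local upper envelope `f̄_{ε,y*}` relative to `Y`, in the extended reals. -/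
noncomputable def envU {n m : ℕ}
    (f : EuclideanSpace ℝ (Fin n) → EuclideanSpace ℝ (Fin m) → ℝ)
    (Y : Set (EuclideanSpace ℝ (Fin m))) (ystar : EuclideanSpace ℝ (Fin m)) (ε : ℝ)
    (x : EuclideanSpace ℝ (Fin n)) : EReal :=
  ⨆ y ∈ {y ∈ Y | ‖y - ystar‖ ≤ ε}, ((f x y : ℝ) : EReal)

/-- `(x*, y*)` is a local minimax point of `f` on `X × Y`. -/
def IsLocalMinimax {n m : ℕ} (X : Set (EuclideanSpace ℝ (Fin n)))
    (Y : Set (EuclideanSpace ℝ (Fin m)))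
    (f : EuclideanSpace ℝ (Fin n) → EuclideanSpace ℝ (Fin m) → ℝ)
    (xstar : EuclideanSpace ℝ (Fin n)) (ystar : EuclideanSpace ℝ (Fin m)) : Prop :=
  (∃ ε > (0 : ℝ), ∀ y ∈ Y, ‖y - ystar‖ ≤ ε → f xstar y ≤ f xstar ystar) ∧
  (∃ εseq : ℕ → ℝ, (∀ k, 0 < εseq k) ∧ Tendsto εseq atTop (nhds 0) ∧
    ∀ k, ∃ δ > (0 : ℝ), ∀ x ∈ X, ‖x - xstar‖ ≤ δ →
      envU f Y ystar (εseq k) xstar ≤ envU f Y ystar (εseq k) x)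

lemma le_envU {n m : ℕ}
    (f : EuclideanSpace ℝ (Fin n) → EuclideanSpace ℝ (Fin m) → ℝ)
    (Y : Set (EuclideanSpace ℝ (Fin m))) (ystar : EuclideanSpace ℝ (Fin m)) {ε : ℝ}
    (x : EuclideanSpace ℝ (Fin n)) {y : EuclideanSpace ℝ (Fin m)}
    (hy : y ∈ Y) (hd : ‖y - ystar‖ ≤ ε) :
    ((f x y : ℝ) : EReal) ≤ envU f Y ystar ε x :=
  le_iSup₂ (f := fun y (_ : y ∈ {y ∈ Y | ‖y - ystar‖ ≤ ε}) => ((f x y : ℝ) : EReal)) y ⟨hy, hd⟩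

lemma envU_le {n m : ℕ}
    (f : EuclideanSpace ℝ (Fin n) → EuclideanSpace ℝ (Fin m) → ℝ)
    (Y : Set (EuclideanSpace ℝ (Fin m))) (ystar : EuclideanSpace ℝ (Fin m)) {ε : ℝ}
    (x : EuclideanSpace ℝ (Fin n)) {c : EReal}
    (h : ∀ y ∈ Y, ‖y - ystar‖ ≤ ε → ((f x y : ℝ) : EReal) ≤ c) :
    envU f Y ystar ε x ≤ c :=
  iSup₂_le fun y hy => h y hy.1 hy.2

lemma envU_mono {n m : ℕ}
    (f : EuclideanSpace ℝ (Fin n) → EuclideanSpace ℝ (Fin m) → ℝ)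
    (Y : Set (EuclideanSpace ℝ (Fin m))) (ystar : EuclideanSpace ℝ (Fin m)) {ε ε' : ℝ}
    (hεε' : ε ≤ ε') (x : EuclideanSpace ℝ (Fin n)) :
    envU f Y ystar ε x ≤ envU f Y ystar ε' x :=
  iSup₂_le fun y hy => le_envU f Y ystar x hy.1 (hy.2.trans hεε')

set_option maxHeartbeats 1000000 in
/-- `(x*, y*)` is local minimax iff there are `δ₀ > 0` and a nonnegative function `h`
on `(0, δ₀]` with `h(δ) → 0` as `δ → 0⁺`, such that for every `δ ∈ (0, δ₀]` and all
`(x, y)` in the `δ`-neighborhood of `(x*, y*)` in `X × Y`,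
`f(x*, y) ≤ f(x*, y*) ≤ f̄_{h(δ), y*}(x)`. -/
theorem isLocalMinimax_iff_jin {n m : ℕ}
    (X : Set (EuclideanSpace ℝ (Fin n))) (Y : Set (EuclideanSpace ℝ (Fin m)))
    (hX : X.Nonempty) (hY : Y.Nonempty)
    (f : EuclideanSpace ℝ (Fin n) → EuclideanSpace ℝ (Fin m) → ℝ)
    (xstar : EuclideanSpace ℝ (Fin n)) (ystar : EuclideanSpace ℝ (Fin m))
    (hxX : xstar ∈ X) (hyY : ystar ∈ Y) :
    IsLocalMinimax X Y f xstar ystar ↔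
      ∃ δ₀ > (0 : ℝ), ∃ h : ℝ → ℝ,
        (∀ δ ∈ Set.Ioc (0 : ℝ) δ₀, 0 ≤ h δ) ∧
        Tendsto h (nhdsWithin 0 (Set.Ioi 0)) (nhds 0) ∧
        ∀ δ ∈ Set.Ioc (0 : ℝ) δ₀,
          ∀ x ∈ X, ‖x - xstar‖ ≤ δ → ∀ y ∈ Y, ‖y - ystar‖ ≤ δ →
            f xstar y ≤ f xstar ystar ∧
            ((f xstar ystar : ℝ) : EReal) ≤ envU f Y ystar (h δ) x := by
  classical
  constructor
  · rintro ⟨⟨ε, hε, hA⟩, ⟨εseq, hεpos, hεlim, hB⟩⟩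
    choose δs hδspos hδs using hB
    -- the index choice
    set K : ℝ → ℕ := fun δ => Nat.findGreatest (fun j => δ ≤ δs j) ⌈1/δ⌉₊ with hK
    refine ⟨min ε (δs 0), lt_min hε (hδspos 0), fun δ => εseq (K δ), ?_, ?_, ?_⟩
    · exact fun δ _ => (hεpos _).le
    · -- tendsto
      have hKtop : Tendsto K (nhdsWithin 0 (Set.Ioi 0)) atTop := by
        rw [tendsto_atTop]
        intro b
        have hmem : Set.Ioc (0:ℝ) (min (δs b) (1/(b+1))) ∈ nhdsWithin 0 (Set.Ioi 0) := by
          apply Ioc_mem_nhdsGT_of_mem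
          exact ⟨le_refl _, lt_min (hδspos b) (by positivity)⟩
        filter_upwards [hmem] with δ hδ
        have hδ0 : (0:ℝ) < δ := hδ.1
        have h1 : δ ≤ δs b := hδ.2.trans (min_le_left _ _)
        have h2 : (b:ℝ) ≤ 1/δ := by
          have : δ ≤ 1/(b+1) := hδ.2.trans (min_le_right _ _)
          have hb1 : (0:ℝ) < (b:ℝ)+1 := by positivity
          calc (b:ℝ) ≤ (b:ℝ)+1 := by linarith
            _ ≤ 1/δ := by
              rw [le_div_iff₀ hδ0]
              calc ((b:ℝ)+1)*δ ≤ ((b:ℝ)+1)*(1/(b+1)) := by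
                    exact mul_le_mul_of_nonneg_left this hb1.le
                _ = 1 := by field_simp
        have hbN : b ≤ ⌈1/δ⌉₊ := by
          calc b = ⌈(b:ℝ)⌉₊ := (Nat.ceil_natCast b).symm
            _ ≤ ⌈1/δ⌉₊ := Nat.ceil_mono h2
        exact Nat.le_findGreatest hbN h1
      exact hεlim.comp hKtop
    · rintro δ ⟨hδ0, hδle⟩ x hxmem hxnorm y hymem hynorm
      have hδε : δ ≤ ε := hδle.trans (min_le_left _ _)
      refine ⟨hA y hymem (hynorm.trans hδε), ?_⟩
      have hP : δ ≤ δs (K δ) := by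
        have h0 : δ ≤ δs 0 := hδle.trans (min_le_right _ _)
        exact Nat.findGreatest_spec (P := fun j => δ ≤ δs j) (Nat.zero_le _) h0
      have step1 : ((f xstar ystar : ℝ) : EReal) ≤ envU f Y ystar (εseq (K δ)) xstar :=
        le_envU f Y ystar xstar hyY (by simp [(hεpos (K δ)).le])
      have step2 := hδs (K δ) x hxmem (hxnorm.trans hP)
      exact step1.trans step2
  · rintro ⟨δ₀, hδ₀, h, hh0, hhlim, hmain⟩
    have hAcore : ∀ y ∈ Y, ‖y - ystar‖ ≤ δ₀ → f xstar y ≤ f xstar ystar := by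
      intro y hy hny
      exact (hmain δ₀ ⟨hδ₀, le_refl _⟩ xstar hxX (by simp [hδ₀.le]) y hy hny).1
    constructor
    · exact ⟨δ₀, hδ₀, hAcore⟩
    · set δk : ℕ → ℝ := fun k => δ₀ / (k+1) with hδk
      have hδkpos : ∀ k, 0 < δk k := fun k => by positivity
      have hδkle : ∀ k, δk k ≤ δ₀ := by
        intro k
        rw [hδk]
        rw [div_le_iff₀ (by positivity : (0:ℝ) < (k:ℝ)+1)]
        nlinarith [Nat.cast_nonneg (α := ℝ) k, hδ₀.le]
      have hδklim : Tendsto δk atTop (nhdsWithin 0 (Set.Ioi 0)) := by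
        apply tendsto_nhdsWithin_of_tendsto_nhds_of_eventually_within
        · exact Tendsto.div_atTop tendsto_const_nhds
            (tendsto_atTop_add_const_right _ 1 tendsto_natCast_atTop_atTop)
        · exact Eventually.of_forall fun k => hδkpos k
      set g : ℕ → ℝ := fun k => h (δk k) + δk k with hg
      have hglim : Tendsto g atTop (nhds 0) := by
        have := (hhlim.comp hδklim).add (hδklim.mono_right nhdsWithin_le_nhds)
        simpa using this
      obtain ⟨N, hN⟩ : ∃ N, ∀ j ≥ N, g j < δ₀ := by
        have := hglim.eventually (gt_mem_nhds hδ₀)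
        exact eventually_atTop.mp this
      refine ⟨fun k => g (k + N), ?_, ?_, ?_⟩
      · intro k
        have := hh0 (δk (k+N)) ⟨hδkpos (k+N), hδkle (k+N)⟩
        have := hδkpos (k+N)
        rw [hg]; dsimp only; linarith
      · exact hglim.comp (tendsto_add_atTop_nat N)
      · intro k
        refine ⟨δk (k+N), hδkpos (k+N), fun x hx hxn => ?_⟩
        have hmem : δk (k+N) ∈ Set.Ioc (0:ℝ) δ₀ := ⟨hδkpos (k+N), hδkle (k+N)⟩
        have hstep := (hmain (δk (k+N)) hmem x hx hxn ystar hyY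
          (by simp [(hδkpos (k+N)).le])).2
        have hgle : g (k+N) ≤ δ₀ := (hN (k+N) (Nat.le_add_left N k)).le
        have hle1 : envU f Y ystar (g (k+N)) xstar ≤ ((f xstar ystar : ℝ) : EReal) := by
          apply envU_le
          intro y hy hny
          exact_mod_cast EReal.coe_le_coe_iff.mpr (hAcore y hy (hny.trans hgle))
        have hle2 : envU f Y ystar (h (δk (k+N))) x ≤ envU f Y ystar (g (k+N)) x := by
          apply envU_mono
          rw [hg]; dsimp only; linarith [hδkpos (k+N)]
        exact (hle1.trans hstep).trans hle2
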